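/- Let p be an odd prime, L = ⟨−1,2⟩ ≤ (Z/pZ)^× of index 3, and g a primitive root mod p. Then the cyclotomic number A(1,2) = |(1 + gL) ∩ g²L| is positive; in fact A(1,2) = A(0,0) + 1 where A(0,0) = |(1 + L) ∩ L|. -/

import Mathlib

/-- The coset `g^i H` viewed as a subset of `ZMod p`. -/
def coset (p : ℕ) (g : (ZMod p)ˣ) (H : Subgroup (ZMod p)ˣ) (i : ℤ) : Set (ZMod p) :=
  (fun h : (ZMod p)ˣ => ((g ^ i * h : (ZMod p)ˣ) : ZMod p)) '' (H : Set (ZMod p)ˣ)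

/-- The cyclotomic number `A(i,j) = |(1 + g^i H) ∩ g^j H|`. -/
noncomputable def cyc (p : ℕ) (g : (ZMod p)ˣ) (H : Subgroup (ZMod p)ˣ) (i j : ℤ) : ℕ :=
  (((fun x => 1 + x) '' coset p g H i) ∩ coset p g H j).ncard

section Aux

variable {p : ℕ} [Fact p.Prime] {g : (ZMod p)ˣ} {L : Subgroup (ZMod p)ˣ}

lemma exists_unit_of_mem_coset {i : ℤ} {z : ZMod p} (hz : z ∈ coset p g L i) :
    ∃ x : (ZMod p)ˣ, (x : ZMod p) = z := by
  rcases hz with ⟨h, _, hx⟩; exact ⟨g ^ i * h, hx⟩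

lemma coe_mem_coset {x : (ZMod p)ˣ} {i : ℤ} :
    (x : ZMod p) ∈ coset p g L i ↔ g ^ (-i) * x ∈ L := by
  constructor
  · rintro ⟨h, hh, hx⟩
    have hx' : g ^ i * h = x := Units.ext hx
    have : g ^ (-i) * x = h := by rw [← hx', ← mul_assoc, ← zpow_add]; simp
    rwa [this]
  · intro hx
    refine ⟨g ^ (-i) * x, hx, ?_⟩
    have h2 : g ^ i * (g ^ (-i) * x) = x := by rw [← mul_assoc, ← zpow_add]; simp
    show ((g ^ i * (g ^ (-i) * x) : (ZMod p)ˣ) : ZMod p) = ↑x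
    exact congrArg Units.val h2

lemma ne_zero_of_mem_coset {i : ℤ} {z : ZMod p} (hz : z ∈ coset p g L i) : z ≠ 0 := by
  obtain ⟨x, rfl⟩ := exists_unit_of_mem_coset hz; exact x.ne_zero

lemma neg_mem_coset (hneg : (-1 : (ZMod p)ˣ) ∈ L) {i : ℤ} {z : ZMod p}
    (hz : z ∈ coset p g L i) : -z ∈ coset p g L i := by
  obtain ⟨x, rfl⟩ := exists_unit_of_mem_coset hz
  rw [coe_mem_coset] at hz
  have h' : (-(x : ZMod p)) = ((-x : (ZMod p)ˣ) : ZMod p) := by simp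
  rw [h', coe_mem_coset]
  have : g ^ (-i) * (-x) = (-1) * (g ^ (-i) * x) := by
    rw [mul_neg, neg_one_mul]
  rw [this]; exact mul_mem hneg hz

lemma mul_mem_coset {i j : ℤ} {z w : ZMod p}
    (hz : z ∈ coset p g L i) (hw : w ∈ coset p g L j) : z * w ∈ coset p g L (i + j) := by
  obtain ⟨x, rfl⟩ := exists_unit_of_mem_coset hz
  obtain ⟨y, rfl⟩ := exists_unit_of_mem_coset hw
  rw [coe_mem_coset] at hz hw
  have : ((x : ZMod p) * y) = ((x * y : (ZMod p)ˣ) : ZMod p) := by simp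
  rw [this, coe_mem_coset]
  have : g ^ (-(i + j)) * (x * y) = (g ^ (-i) * x) * (g ^ (-j) * y) := by
    rw [neg_add, zpow_add]; exact mul_mul_mul_comm _ _ _ _
  rw [this]; exact mul_mem hz hw

lemma inv_mem_coset {i : ℤ} {z : ZMod p}
    (hz : z ∈ coset p g L i) : z⁻¹ ∈ coset p g L (-i) := by
  obtain ⟨x, rfl⟩ := exists_unit_of_mem_coset hz
  rw [coe_mem_coset] at hz
  rw [← Units.val_inv_eq_inv_val, coe_mem_coset]
  have h2 := inv_mem hz
  rwa [mul_inv, ← zpow_neg] at h2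

lemma coset_add_three (h3 : g ^ (3:ℤ) ∈ L) (i : ℤ) :
    coset p g L (i + 3) = coset p g L i := by
  ext z
  constructor <;> intro hz <;> obtain ⟨x, rfl⟩ := exists_unit_of_mem_coset hz <;>
    rw [coe_mem_coset] at hz ⊢
  · have : g ^ (-i) * x = g ^ (3:ℤ) * (g ^ (-(i+3)) * x) := by
      rw [← mul_assoc, ← zpow_add]; ring_nf
    rw [this]; exact mul_mem h3 hz
  · have : g ^ (-(i+3)) * x = (g ^ (3:ℤ))⁻¹ * (g ^ (-i) * x) := by
      rw [← zpow_neg, ← mul_assoc, ← zpow_add]; ring_nf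
    rw [this]; exact mul_mem (inv_mem h3) hz

lemma mem_coset_of_both {i j : ℤ} {z : ZMod p}
    (hi : z ∈ coset p g L i) (hj : z ∈ coset p g L j) : g ^ (i - j) ∈ L := by
  obtain ⟨x, rfl⟩ := exists_unit_of_mem_coset hi
  rw [coe_mem_coset] at hi hj
  have h2 := mul_mem hj (inv_mem hi)
  have : (g ^ (-j) * x) * (g ^ (-i) * x)⁻¹ = g ^ (i - j) := by
    rw [mul_inv, ← zpow_neg, mul_mul_mul_comm, mul_inv_cancel, mul_one, ← zpow_add]
    ring_nf
  rwa [this] at h2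

lemma coset_cover (h3 : ∀ x : (ZMod p)ˣ, x ^ (3:ℕ) ∈ L)
    (hg : ∀ x : (ZMod p)ˣ, x ∈ Subgroup.zpowers g) {z : ZMod p} (hz : z ≠ 0) :
    z ∈ coset p g L 0 ∪ coset p g L 1 ∪ coset p g L 2 := by
  obtain ⟨x, rfl⟩ : ∃ x : (ZMod p)ˣ, (x : ZMod p) = z := ⟨hz.isUnit.unit, hz.isUnit.unit_spec⟩
  obtain ⟨k, hk⟩ := Subgroup.mem_zpowers_iff.mp (hg x)
  have key : ∀ r : ℤ, k % 3 = r → g ^ (-r) * x ∈ L := by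
    intro r hr
    have : g ^ (-r) * x = (g ^ (3:ℤ)) ^ (k / 3) := by
      rw [← hk, ← zpow_add, ← zpow_mul]
      congr 1
      omega
    rw [this]
    have h3' : g ^ (3:ℤ) ∈ L := by rw [show (3:ℤ) = (3:ℕ) by norm_num, zpow_natCast]; exact h3 g
    exact Subgroup.zpow_mem L h3' _
  have h0 : (0:ℤ) ≤ k % 3 := Int.emod_nonneg k (by norm_num)
  have h1 : k % 3 < 3 := Int.emod_lt_of_pos k (by norm_num)
  have : k % 3 = 0 ∨ k % 3 = 1 ∨ k % 3 = 2 := by omega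
  rcases this with h | h | h
  · exact Or.inl (Or.inl (coe_mem_coset.mpr (key 0 h)))
  · exact Or.inl (Or.inr (coe_mem_coset.mpr (key 1 h)))
  · exact Or.inr (coe_mem_coset.mpr (key 2 h))

end Aux


lemma cyc_sub_subset {p : ℕ} [Fact p.Prime] {g : (ZMod p)ˣ} {L : Subgroup (ZMod p)ˣ}
    (hneg : (-1 : (ZMod p)ˣ) ∈ L) (i j : ℤ) :
    (fun z : ZMod p => 1 - z) '' (((fun x => 1 + x) '' coset p g L i) ∩ coset p g L j) ⊆
      ((fun x => 1 + x) '' coset p g L j) ∩ coset p g L i := by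
  rintro w ⟨z, ⟨⟨a, ha, hza⟩, hzj⟩, hwz⟩
  simp only at hza hwz
  subst hza; subst hwz
  constructor
  · refine ⟨-(1 + a), neg_mem_coset hneg hzj, ?_⟩
    show (1 : ZMod p) + -(1 + a) = 1 - (1 + a)
    ring
  · show (1 : ZMod p) - (1 + a) ∈ coset p g L i
    have h : (1 : ZMod p) - (1 + a) = -a := by ring
    rw [h]; exact neg_mem_coset hneg ha

lemma cyc_symm {p : ℕ} [Fact p.Prime] {g : (ZMod p)ˣ} {L : Subgroup (ZMod p)ˣ}
    (hneg : (-1 : (ZMod p)ˣ) ∈ L) (i j : ℤ) : cyc p g L i j = cyc p g L j i := by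
  simp only [cyc]
  have himg : (fun z : ZMod p => 1 - z) '' (((fun x => 1 + x) '' coset p g L i) ∩ coset p g L j)
      = ((fun x => 1 + x) '' coset p g L j) ∩ coset p g L i := by
    apply subset_antisymm (cyc_sub_subset hneg i j)
    intro w hw
    have h1 : ((fun x => 1 + x) '' coset p g L j) ∩ coset p g L i
        = (fun z : ZMod p => 1 - z) '' ((fun z : ZMod p => 1 - z) ''
          (((fun x => 1 + x) '' coset p g L j) ∩ coset p g L i)) := by
      rw [Set.image_image]
      simp
    rw [h1] at hw
    exact Set.image_mono (cyc_sub_subset hneg j i) hw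
  rw [← himg, Set.ncard_image_of_injective _ sub_right_injective]

theorem stmt_15 (p : ℕ) [Fact p.Prime] (hodd : Odd p)
    (u : (ZMod p)ˣ) (hu : (u : ZMod p) = 2)
    (L : Subgroup (ZMod p)ˣ) (hL : L = Subgroup.closure {-1, u})
    (hℓ : L.index = 3)
    (g : (ZMod p)ˣ) (hg : ∀ x : (ZMod p)ˣ, x ∈ Subgroup.zpowers g) :
    0 < cyc p g L 1 2 ∧ cyc p g L 1 2 = cyc p g L 0 0 + 1 := by
  haveI : NeZero p := ⟨(Fact.out : p.Prime).ne_zero⟩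
  have hneg : (-1 : (ZMod p)ˣ) ∈ L := by
    rw [hL]; exact Subgroup.subset_closure (Set.mem_insert _ _)
  have h3 : ∀ x : (ZMod p)ˣ, x ^ (3 : ℕ) ∈ L := by
    intro x; have := Subgroup.pow_index_mem L x; rwa [hℓ] at this
  have h3z : g ^ (3 : ℤ) ∈ L := by
    rw [show (3 : ℤ) = ((3 : ℕ) : ℤ) by norm_num, zpow_natCast]; exact h3 g
  have hgL : g ∉ L := by
    intro h
    have htop : L = ⊤ := by
      rw [eq_top_iff]; intro x _
      obtain ⟨k, hk⟩ := Subgroup.mem_zpowers_iff.mp (hg x)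
      rw [← hk]; exact Subgroup.zpow_mem L h k
    rw [htop, Subgroup.index_top] at hℓ; omega
  have hg1L : g ^ (1 : ℤ) ∉ L := by rwa [zpow_one]
  have hg2L : g ^ (2 : ℤ) ∉ L := by
    intro h
    apply hgL
    have he : g = g ^ (3 : ℤ) * (g ^ (2 : ℤ))⁻¹ := by
      rw [← zpow_neg, ← zpow_add]; norm_num
    rw [he]; exact mul_mem h3z (inv_mem h)
  have hgm1L : g ^ (-1 : ℤ) ∉ L := by
    intro h; apply hg1L
    have := inv_mem h; rwa [← zpow_neg, neg_neg] at this
  have hgm2L : g ^ (-2 : ℤ) ∉ L := by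
    intro h; apply hg2L
    have := inv_mem h; rwa [← zpow_neg, neg_neg] at this
  have hdisj : ∀ i j : ℤ, g ^ (i - j) ∉ L →
      ∀ A B : Set (ZMod p), Disjoint (A ∩ coset p g L i) (B ∩ coset p g L j) := by
    intro i j hij A B
    rw [Set.disjoint_left]
    rintro z ⟨-, hzi⟩ ⟨-, hzj⟩
    exact hij (mem_coset_of_both hzi hzj)
  -- coset periodicity
  have hc2 : coset p g L 2 = coset p g L (-1) := by
    have := coset_add_three h3z (-1); norm_num at this; exact this
  have hc1 : coset p g L 1 = coset p g L (-2) := by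
    have := coset_add_three h3z (-2); norm_num at this; exact this
  -- cardinalities
  set n := (L : Set (ZMod p)ˣ).ncard with hn
  have hcardS : ∀ i : ℤ, ((fun x => 1 + x) '' coset p g L i).ncard = n := by
    intro i
    rw [Set.ncard_image_of_injective _ (add_right_injective (1 : ZMod p))]
    exact Set.ncard_image_of_injective _ (Units.val_injective.comp (mul_right_injective (g ^ i)))
  -- 0 and -1 facts
  have hm1C0 : (-1 : ZMod p) ∈ coset p g L 0 := by
    have h' : (-1 : ZMod p) = ((-1 : (ZMod p)ˣ) : ZMod p) := by simp
    rw [h', coe_mem_coset]; simpa using hneg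
  have h0S0 : (0 : ZMod p) ∈ (fun x => 1 + x) '' coset p g L 0 :=
    ⟨-1, hm1C0, by norm_num⟩
  have h0nS1 : (0 : ZMod p) ∉ (fun x => 1 + x) '' coset p g L 1 := by
    rintro ⟨a, ha, hza⟩
    simp only at hza
    have ha' : a = -1 := by linear_combination hza
    rw [ha'] at ha
    exact hgm1L (by simpa using mem_coset_of_both hm1C0 ha)
  -- partition of S 0
  have hU0 : (fun x => 1 + x) '' coset p g L 0 =
      insert (0 : ZMod p)
        ((((fun x => 1 + x) '' coset p g L 0) ∩ coset p g L 0) ∪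
          ((((fun x => 1 + x) '' coset p g L 0) ∩ coset p g L 1) ∪
            (((fun x => 1 + x) '' coset p g L 0) ∩ coset p g L 2))) := by
    ext z
    constructor
    · intro hz
      by_cases h0 : z = 0
      · rw [h0]; exact Set.mem_insert _ _
      · apply Set.mem_insert_of_mem
        rcases coset_cover h3 hg h0 with (h | h) | h
        · exact Or.inl ⟨hz, h⟩
        · exact Or.inr (Or.inl ⟨hz, h⟩)
        · exact Or.inr (Or.inr ⟨hz, h⟩)
    · intro hz
      rcases Set.mem_insert_iff.mp hz with rfl | (⟨h, -⟩ | (⟨h, -⟩ | ⟨h, -⟩))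
      · exact h0S0
      all_goals exact h
  -- partition of S 1
  have hU1 : (fun x => 1 + x) '' coset p g L 1 =
      ((((fun x => 1 + x) '' coset p g L 1) ∩ coset p g L 0) ∪
        ((((fun x => 1 + x) '' coset p g L 1) ∩ coset p g L 1) ∪
          (((fun x => 1 + x) '' coset p g L 1) ∩ coset p g L 2))) := by
    ext z
    constructor
    · intro hz
      have h0 : z ≠ 0 := fun h => h0nS1 (h ▸ hz)
      rcases coset_cover h3 hg h0 with (h | h) | h
      · exact Or.inl ⟨hz, h⟩
      · exact Or.inr (Or.inl ⟨hz, h⟩)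
      · exact Or.inr (Or.inr ⟨hz, h⟩)
    · rintro (⟨h, -⟩ | (⟨h, -⟩ | ⟨h, -⟩))
      all_goals exact h
  -- counting for S 0
  have hd01 : g ^ ((0 : ℤ) - 1) ∉ L := by rw [show (0:ℤ) - 1 = -1 by norm_num]; exact hgm1L
  have hd02 : g ^ ((0 : ℤ) - 2) ∉ L := by rw [show (0:ℤ) - 2 = -2 by norm_num]; exact hgm2L
  have hd12 : g ^ ((1 : ℤ) - 2) ∉ L := by rw [show (1:ℤ) - 2 = -1 by norm_num]; exact hgm1L
  have e0 : n = 1 + (cyc p g L 0 0 + (cyc p g L 0 1 + cyc p g L 0 2)) := by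
    rw [← hcardS 0]
    conv_lhs => rw [hU0]
    rw [Set.ncard_insert_of_notMem ?_ (Set.toFinite _)]
    · rw [Set.ncard_union_eq ?_ (Set.toFinite _) (Set.toFinite _),
        Set.ncard_union_eq (hdisj 1 2 hd12 _ _) (Set.toFinite _) (Set.toFinite _)]
      · simp only [cyc]; omega
      · exact Set.disjoint_union_right.mpr ⟨hdisj 0 1 hd01 _ _, hdisj 0 2 hd02 _ _⟩
    · rintro ((⟨-, h⟩ | (⟨-, h⟩ | ⟨-, h⟩)))
      all_goals exact ne_zero_of_mem_coset h rfl
  -- counting for S 1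
  have e1 : n = cyc p g L 1 0 + (cyc p g L 1 1 + cyc p g L 1 2) := by
    rw [← hcardS 1]
    conv_lhs => rw [hU1]
    rw [Set.ncard_union_eq ?_ (Set.toFinite _) (Set.toFinite _),
      Set.ncard_union_eq (hdisj 1 2 hd12 _ _) (Set.toFinite _) (Set.toFinite _)]
    · simp only [cyc]
    · exact Set.disjoint_union_right.mpr ⟨hdisj 0 1 hd01 _ _, hdisj 0 2 hd02 _ _⟩
  -- the bijection  cyc 1 1 = cyc 2 0
  have hinvol : ∀ z : ZMod p, z - 1 ≠ 0 →
      (z * (z - 1)⁻¹) * ((z * (z - 1)⁻¹) - 1)⁻¹ = z := by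
    intro z hz
    have h1 : z * (z - 1)⁻¹ - 1 = (z - 1)⁻¹ := by
      field_simp
      ring
    rw [h1, inv_inv, mul_assoc, inv_mul_cancel₀ hz, mul_one]
  have himg2 : (fun z : ZMod p => z * (z - 1)⁻¹) ''
      (((fun x => 1 + x) '' coset p g L 1) ∩ coset p g L 1) =
      ((fun x => 1 + x) '' coset p g L 2) ∩ coset p g L 0 := by
    ext w
    constructor
    · rintro ⟨z, ⟨⟨a, ha, hza⟩, hz1⟩, hwz⟩
      simp only at hza hwz
      subst hza; subst hwz
      have ha0 : a ≠ 0 := ne_zero_of_mem_coset ha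
      have hd : (1 + a) - 1 = a := by ring
      constructor
      · refine ⟨a⁻¹, ?_, ?_⟩
        · rw [hc2]; exact inv_mem_coset ha
        · show (1 : ZMod p) + a⁻¹ = (1 + a) * ((1 + a) - 1)⁻¹
          rw [hd]; field_simp; ring
      · show (1 + a) * ((1 + a) - 1)⁻¹ ∈ coset p g L 0
        rw [hd]
        have h := mul_mem_coset hz1 (inv_mem_coset ha)
        norm_num at h
        exact h
    · rintro ⟨⟨b, hb, hwb⟩, hw0⟩
      simp only at hwb
      subst hwb
      have hb0 : b ≠ 0 := ne_zero_of_mem_coset hb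
      refine ⟨1 + b⁻¹, ⟨⟨b⁻¹, ?_, rfl⟩, ?_⟩, ?_⟩
      · rw [hc1]
        have := inv_mem_coset hb
        norm_num at this
        exact this
      · have heq : (1 : ZMod p) + b⁻¹ = (1 + b) * b⁻¹ := by field_simp; ring
        show (1 : ZMod p) + b⁻¹ ∈ coset p g L 1
        rw [heq, hc1]
        have h := mul_mem_coset hw0 (inv_mem_coset hb)
        norm_num at h
        exact h
      · show (1 + b⁻¹) * ((1 + b⁻¹) - 1)⁻¹ = 1 + b
        have hd : (1 + b⁻¹) - 1 = b⁻¹ := by ring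
        rw [hd, inv_inv]
        field_simp
        ring
  have hinj2 : Set.InjOn (fun z : ZMod p => z * (z - 1)⁻¹)
      (((fun x => 1 + x) '' coset p g L 1) ∩ coset p g L 1) := by
    rintro z1 ⟨⟨a1, ha1, hza1⟩, -⟩ z2 ⟨⟨a2, ha2, hza2⟩, -⟩ h
    simp only at hza1 hza2 h
    have e1 : z1 - 1 ≠ 0 := by
      rw [← hza1]; intro hc
      exact ne_zero_of_mem_coset ha1 (by linear_combination hc)
    have e2 : z2 - 1 ≠ 0 := by
      rw [← hza2]; intro hc
      exact ne_zero_of_mem_coset ha2 (by linear_combination hc)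
    calc z1 = (z1 * (z1 - 1)⁻¹) * ((z1 * (z1 - 1)⁻¹) - 1)⁻¹ := (hinvol z1 e1).symm
      _ = (z2 * (z2 - 1)⁻¹) * ((z2 * (z2 - 1)⁻¹) - 1)⁻¹ := by rw [h]
      _ = z2 := hinvol z2 e2
  have ecyc11 : cyc p g L 1 1 = cyc p g L 2 0 := by
    simp only [cyc]
    rw [← himg2, Set.ncard_image_of_injOn hinj2]
  have ecyc10 : cyc p g L 1 0 = cyc p g L 0 1 := cyc_symm hneg 1 0
  have ecyc20 : cyc p g L 2 0 = cyc p g L 0 2 := cyc_symm hneg 2 0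
  have key : cyc p g L 1 2 = cyc p g L 0 0 + 1 := by omega
  exact ⟨by omega, key⟩
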